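/- Consider mechanism M4 (full information, proportional allocation, continuous action space) with N ≥ 2 users, reward R > 0, cost parameter c > 0, and types q_i ∈ (0,1]. Let x be a pure Nash equilibrium in which every user plays an interior action, i.e., 0 < x_i < q_i for all i, and let H = Σ_{k=1}^{N} 1/q_k. Then Σ_{k=1}^{N} x_k = R·(N−1)/(c·H), and for every i, x_i = (R·(N−1)/(c·H))·(1 − (N−1)/(q_i·H)). -/

import Mathlib

open Finset

/-- Utility in mechanism M4 (proportional allocation, continuous action space):
`u_i(x) = R * x i / (∑ j, x j) - c * x i / q i` if `∑ j, x j > 0`, and `0`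
if all contributions are zero. -/
noncomputable def utilM4 {N : ℕ} (R c : ℝ) (q x : Fin N → ℝ) (i : Fin N) : ℝ :=
  if 0 < ∑ j, x j then R * x i / (∑ j, x j) - c * x i / q i else 0

/-- Pure Nash equilibrium of mechanism M4: every action lies in `[0, q i]` and
no user can strictly increase her utility by unilaterally changing her own
action within `[0, q i]`. -/
noncomputable def isPNE_M4 {N : ℕ} (R c : ℝ) (q : Fin N → ℝ) (x : Fin N → ℝ) : Prop :=
  (∀ i, x i ∈ Set.Icc 0 (q i)) ∧
  ∀ i, ∀ y ∈ Set.Icc 0 (q i),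
    utilM4 R c q (Function.update x i y) i ≤ utilM4 R c q x i

theorem stmt_10 (N : ℕ) (hN : 2 ≤ N) (R c : ℝ) (hR : 0 < R) (hc : 0 < c)
    (q : Fin N → ℝ) (hq1 : ∀ i, q i ≤ 1) (hq0 : ∀ i, 0 < q i)
    (x : Fin N → ℝ) (hx : isPNE_M4 R c q x)
    (hint : ∀ i, 0 < x i ∧ x i < q i) :
    (∑ k, x k) = R * ((N : ℝ) - 1) / (c * ∑ k, 1 / q k) ∧
      ∀ i, x i = R * ((N : ℝ) - 1) / (c * ∑ k, 1 / q k) *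
        (1 - ((N : ℝ) - 1) / (q i * ∑ k, 1 / q k)) := by
  classical
  have hNpos : 0 < N := by omega
  set S : ℝ := ∑ k, x k with hS
  set H : ℝ := ∑ k, 1 / q k with hH
  have hxpos : ∀ i, 0 < x i := fun i => (hint i).1
  have hxnn : ∀ i, 0 ≤ x i := fun i => (hxpos i).le
  have hSpos : 0 < S :=
    Finset.sum_pos (fun i _ => hxpos i) (univ_nonempty_iff.2 ⟨⟨0, hNpos⟩⟩)
  have hHpos : 0 < H :=
    Finset.sum_pos (fun i _ => one_div_pos.2 (hq0 i)) (univ_nonempty_iff.2 ⟨⟨0, hNpos⟩⟩)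
  -- the "rest" sum
  have hT : ∀ i : Fin N, 0 < S - x i := by
    intro i
    have : ∃ j : Fin N, j ≠ i :=
      Fintype.exists_ne_of_one_lt_card (by simp; omega) i
    rcases this with ⟨j, hj⟩
    have hsub : S - x i = ∑ k ∈ univ.erase i, x k := by
      rw [hS, ← Finset.add_sum_erase _ _ (mem_univ i)]; ring
    rw [hsub]
    exact Finset.sum_pos' (fun k _ => hxnn k)
      ⟨j, Finset.mem_erase.2 ⟨hj, mem_univ j⟩, hxpos j⟩
  have hupdate : ∀ (i : Fin N) (y : ℝ),
      ∑ j, Function.update x i y j = (S - x i) + y := by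
    intro i y
    rw [Finset.sum_update_of_mem (mem_univ i), hS,
      ← Finset.add_sum_erase _ _ (mem_univ i)]
    simp [Finset.sdiff_singleton_eq_erase]
    ring
  -- First-order condition
  have FOC : ∀ i : Fin N, R * (S - x i) / S ^ 2 = c / q i := by
    intro i
    set T : ℝ := S - x i with hTdef
    have hTpos : 0 < T := hT i
    set g : ℝ → ℝ := fun y => R * y / (T + y) - c * y / q i with hg
    have hglemax : IsLocalMax g (x i) := by
      have hmem : Set.Icc 0 (q i) ∈ nhds (x i) :=
        Icc_mem_nhds (hxpos i) (hint i).2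
      refine Filter.eventually_of_mem hmem (fun y hy => ?_)
      have h1 : utilM4 R c q (Function.update x i y) i = g y := by
        have hsum : ∑ j, Function.update x i y j = T + y := hupdate i y
        have hpos : 0 < T + y := by
          have := hy.1; linarith
        simp [utilM4, hsum, hpos, hg, Function.update_self]
      have h2 : utilM4 R c q x i = g (x i) := by
        have : T + x i = S := by rw [hTdef]; ring
        simp [utilM4, ← hS, hSpos, hg, this]
      rw [← h1, ← h2]
      exact hx.2 i y hy
    have hder : HasDerivAt g (R * T / S ^ 2 - c / q i) (x i) := by
      have hne : T + x i ≠ 0 := by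
        have : T + x i = S := by rw [hTdef]; ring
        rw [this]; exact hSpos.ne'
      have h1 : HasDerivAt (fun y => R * y) R (x i) := by
        simpa using (hasDerivAt_id (x i)).const_mul R
      have h2 : HasDerivAt (fun y => T + y) 1 (x i) := by
        simpa using (hasDerivAt_id (x i)).const_add T
      have h3 : HasDerivAt (fun y => R * y / (T + y))
          ((R * (T + x i) - R * x i * 1) / (T + x i) ^ 2) (x i) := h1.div h2 hne
      have h4 : HasDerivAt (fun y => c * y / q i) (c / q i) (x i) := by
        simpa using ((hasDerivAt_id (x i)).const_mul c).div_const (q i)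
      have := h3.sub h4
      convert this using 1
      · rfl
      · rfl
      · rfl
      have hTS : T + x i = S := by rw [hTdef]; ring
      rw [hTS]; ring
    have hzero : R * T / S ^ 2 - c / q i = 0 := by
      have := hglemax.deriv_eq_zero
      rw [hder.deriv] at this
      exact this
    linarith
  -- sum the FOC over all i
  have hsumFOC : R * ((N : ℝ) - 1) / S = c * H := by
    have h1 : ∑ i : Fin N, R * (S - x i) / S ^ 2 = ∑ i : Fin N, c / q i := by
      exact Finset.sum_congr rfl (fun i _ => FOC i)
    have h2 : ∑ i : Fin N, R * (S - x i) / S ^ 2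
        = R * ((N : ℝ) * S - S) / S ^ 2 := by
      rw [← Finset.sum_div, ← Finset.mul_sum, Finset.sum_sub_distrib, ← hS]
      simp [Finset.card_univ]
    have h3 : ∑ i : Fin N, c / q i = c * H := by
      rw [hH, Finset.mul_sum]
      exact Finset.sum_congr rfl (fun i _ => by ring)
    rw [h2, h3] at h1
    field_simp at h1 ⊢
    nlinarith [sq_nonneg S, hSpos]
  have hSeq : S = R * ((N : ℝ) - 1) / (c * H) := by
    have hcH : c * H ≠ 0 := by positivity
    field_simp at hsumFOC ⊢
    linarith [hsumFOC]
  refine ⟨hSeq, fun i => ?_⟩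
  -- from FOC: x i = S - c * S^2 / (R * q i)
  have hfoc := FOC i
  have hqi := hq0 i
  have hxi : x i = S - c * S ^ 2 / (R * q i) := by
    field_simp at hfoc ⊢
    nlinarith [hfoc]
  -- and c*S/R = (N-1)/H
  have hcS : c * S / R = ((N : ℝ) - 1) / H := by
    rw [hSeq]; field_simp
  rw [hxi, ← hSeq]
  have : c * S ^ 2 / (R * q i) = S * (((N : ℝ) - 1) / (q i * H)) := by
    have : c * S ^ 2 / (R * q i) = (c * S / R) * S / q i := by
      field_simp
    rw [this, hcS]; field_simp
  rw [this]; ring
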